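/- Let f : [0,1]^d → ℝ^d be a continuous function such that for every i ∈ {1,…,d} and every x ∈ [0,1]^d with x_i = 0 we have (f(x))_i ≤ 0, and for every x ∈ [0,1]^d with x_i = 1 we have (f(x))_i ≥ 1. Then the image f([0,1]^d) contains the cube [0,1]^d. -/

import Mathlib

open Finset Equiv Function

namespace PM
attribute [local instance] Classical.propDecidable

def vtx {d n : ℕ} (z : Fin d → Fin n) (π : Equiv.Perm (Fin d)) (k : ℕ) (i : Fin d) : ℕ :=
  (z i : ℕ) + if ((π.symm i : ℕ) < k) then 1 else 0

lemma vtx_le {d n : ℕ} (z : Fin d → Fin n) (π : Equiv.Perm (Fin d)) (k : ℕ) (i : Fin d) :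
    vtx z π k i ≤ n := by
  have := (z i).2
  unfold vtx; split <;> omega


def IsFull {d n : ℕ} (ℓ : (Fin d → ℕ) → ℕ) (z : Fin d → Fin n) (π : Equiv.Perm (Fin d)) :
    Prop :=
  ∀ j ≤ d, ∃ m : Fin (d + 1), ℓ (vtx z π (m : ℕ)) = j

def IsDoor {d n : ℕ} (ℓ : (Fin d → ℕ) → ℕ) (z : Fin d → Fin n) (π : Equiv.Perm (Fin d))
    (k : Fin (d + 1)) : Prop :=
  ∀ j < d, ∃ m : Fin (d + 1), m ≠ k ∧ ℓ (vtx z π (m : ℕ)) = j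

def bump {n : ℕ} (a : Fin n) : Fin n := if h : (a : ℕ) + 1 < n then ⟨a + 1, h⟩ else a

lemma bump_val {n : ℕ} (a : Fin n) (h : (a : ℕ) + 1 < n) : (bump a : ℕ) = a + 1 := by
  simp [bump, h]

def drop {n : ℕ} (a : Fin n) : Fin n := ⟨(a : ℕ) - 1, lt_of_le_of_lt (Nat.sub_le _ _) a.2⟩

lemma drop_val {n : ℕ} (a : Fin n) : (drop a : ℕ) = (a : ℕ) - 1 := rfl

lemma mul_symm_apply {α : Type*} (π ρ : Equiv.Perm α) (i : α) :
    (π * ρ).symm i = ρ.symm (π.symm i) := rfl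

/-- Key rotation identity: bumping the base at `π 0` and rotating the permutation
shifts vertex indices by one. -/
lemma vtx_rot {d n : ℕ} (z : Fin (d+1) → Fin n) (π : Equiv.Perm (Fin (d+1)))
    (hz : (z (π 0) : ℕ) + 1 < n) (m : ℕ) (hm : m ≤ d) :
    vtx (Function.update z (π 0) (bump (z (π 0)))) (π * finRotate (d+1)) m
      = vtx z π (m+1) := by
  funext i
  have hsymm : (π * finRotate (d+1)).symm i = (finRotate (d+1)).symm (π.symm i) :=
    mul_symm_apply _ _ _
  unfold vtx
  rw [hsymm]
  by_cases hi : π.symm i = 0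
  · have hiπ : i = π 0 := by rw [← hi, Equiv.apply_symm_apply]
    have h1 : (finRotate (d+1)).symm (0 : Fin (d+1)) = Fin.last d := by
      rw [Equiv.symm_apply_eq, finRotate_succ_apply, Fin.last_add_one]
    rw [hi, h1, Function.update_apply, if_pos hiπ]
    rw [hiπ, bump_val _ hz]
    have h2 : ¬ ((Fin.last d : ℕ) < m) := by rw [Fin.val_last]; omega
    rw [if_neg h2, if_pos (by rw [Fin.val_zero]; omega)]
  · have hiπ : i ≠ π 0 := by
      intro h; apply hi; rw [h, Equiv.symm_apply_apply]
    rw [Function.update_apply, if_neg hiπ]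
    have hx : ((π.symm i : ℕ)) ≠ 0 := by
      intro h; exact hi (Fin.ext h)
    have h1 : ((finRotate (d+1)).symm (π.symm i) : ℕ) = (π.symm i : ℕ) - 1 := by
      have : (finRotate (d+1)).symm (π.symm i) = π.symm i - 1 := by
        rw [Equiv.symm_apply_eq, finRotate_succ_apply, sub_add_cancel]
      rw [this, Fin.coe_sub_one, if_neg (fun h => hx (by rw [h]; rfl))]
    rw [h1]
    congr 1
    have := (π.symm i).2
    by_cases h : (π.symm i : ℕ) - 1 < m
    · rw [if_pos h, if_pos (by omega)]
    · rw [if_neg h, if_neg (by omega)]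

/-- Swapping two adjacent positions of the permutation does not change vertices other
than vertex `k`. -/
lemma vtx_swap {d n : ℕ} (z : Fin d → Fin n) (π : Equiv.Perm (Fin d))
    (a b : Fin d) (k : ℕ) (hab : (a : ℕ) + 1 = k ∧ (b : ℕ) = k) (m : ℕ) (hmk : m ≠ k) :
    vtx z (π * Equiv.swap a b) m = vtx z π m := by
  funext i
  unfold vtx
  rw [mul_symm_apply]
  have hswap : (Equiv.swap a b).symm = Equiv.swap a b := Equiv.symm_swap a b
  rw [hswap]
  congr 1
  rcases Equiv.swap_apply_def a b (π.symm i) with _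
  by_cases h1 : π.symm i = a
  · rw [h1, Equiv.swap_apply_left]
    have : (a : ℕ) = k - 1 := by omega
    simp only [hab.2, this]
    by_cases h : k < m <;> [rw [if_pos h, if_pos (by omega)]; rw [if_neg h, if_neg (by omega)]]
  · by_cases h2 : π.symm i = b
    · rw [h2, Equiv.swap_apply_right]
      simp only [hab.2]
      have ha : (a : ℕ) = k - 1 := by omega
      rw [ha]
      by_cases h : k - 1 < m <;>
        [rw [if_pos h, if_pos (by omega)]; rw [if_neg h, if_neg (by omega)]]
    · rw [Equiv.swap_apply_of_ne_of_ne h1 h2]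


/-- assemble a permutation of `Fin (d+1)` sending `0 ↦ last` and `j.succ ↦ (σ j).castSucc`. -/
def asmPerm {d : ℕ} (σ : Equiv.Perm (Fin d)) : Equiv.Perm (Fin (d + 1)) where
  toFun := Fin.cons (Fin.last d) (fun j => (σ j).castSucc)
  invFun := Fin.lastCases 0 (fun j => (σ.symm j).succ)
  left_inv := by
    intro k
    induction k using Fin.cases with
    | zero => simp
    | succ j => simp
  right_inv := by
    intro i
    induction i using Fin.lastCases with
    | last => simp
    | cast j => simp

@[simp] lemma asmPerm_zero {d : ℕ} (σ : Equiv.Perm (Fin d)) : asmPerm σ 0 = Fin.last d := rfl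

@[simp] lemma asmPerm_succ {d : ℕ} (σ : Equiv.Perm (Fin d)) (j : Fin d) :
    asmPerm σ j.succ = (σ j).castSucc := by
  show (Fin.cons (Fin.last d) (fun j => (σ j).castSucc) : Fin (d+1) → Fin (d+1)) j.succ = _
  simp

@[simp] lemma asmPerm_symm_last {d : ℕ} (σ : Equiv.Perm (Fin d)) :
    (asmPerm σ).symm (Fin.last d) = 0 := by
  rw [Equiv.symm_apply_eq]; rfl

@[simp] lemma asmPerm_symm_cast {d : ℕ} (σ : Equiv.Perm (Fin d)) (j : Fin d) :
    (asmPerm σ).symm j.castSucc = (σ.symm j).succ := by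
  rw [Equiv.symm_apply_eq, asmPerm_succ, Equiv.apply_symm_apply]

/-- the inverse construction, for `π` with `π 0 = last`. -/
def disasmPerm {d : ℕ} (π : Equiv.Perm (Fin (d + 1))) (hπ : π 0 = Fin.last d) :
    Equiv.Perm (Fin d) where
  toFun := fun j => (π j.succ).castPred (by
    intro h
    have : (j.succ : Fin (d+1)) = 0 := π.injective (h.trans hπ.symm)
    exact (Fin.succ_ne_zero j) this)
  invFun := fun j => (π.symm j.castSucc).pred (by
    intro h
    have : (j.castSucc : Fin (d+1)) = Fin.last d := by
      rw [← hπ, ← h, Equiv.apply_symm_apply]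
    exact (Fin.castSucc_lt_last j).ne this)
  left_inv := by
    intro j
    simp [Fin.castSucc_castPred]
  right_inv := by
    intro j
    simp [Fin.succ_pred]

lemma asmPerm_disasmPerm {d : ℕ} (π : Equiv.Perm (Fin (d + 1))) (hπ : π 0 = Fin.last d) :
    asmPerm (disasmPerm π hπ) = π := by
  ext k
  induction k using Fin.cases with
  | zero => rw [asmPerm_zero, hπ]
  | succ j =>
    rw [asmPerm_succ]
    simp only [disasmPerm, Equiv.coe_fn_mk]
    simp [Fin.castSucc_castPred]

/-- vertex correspondence for the boundary face: vertices `m+1` of the assembled simplex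
are the `snoc` extensions of vertices `m` of the face simplex. -/
lemma vtx_asm {d n : ℕ} (hn : 0 < n) (z₀ : Fin d → Fin n) (σ : Equiv.Perm (Fin d))
    (m : ℕ) :
    vtx (Fin.snoc z₀ (⟨n - 1, by omega⟩ : Fin n)) (asmPerm σ) (m + 1)
      = Fin.snoc (vtx z₀ σ m) n := by
  funext i
  induction i using Fin.lastCases with
  | last =>
    unfold vtx
    rw [Fin.snoc_last, Fin.snoc_last, asmPerm_symm_last]
    simp only [Fin.val_zero]
    simp only [show 0 < m + 1 from by omega, if_true]
    show n - 1 + 1 = n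
    omega
  | cast j =>
    unfold vtx
    rw [Fin.snoc_castSucc, Fin.snoc_castSucc, asmPerm_symm_cast]
    simp only [Fin.val_succ]
    congr 1
    by_cases h : ((σ.symm j : ℕ)) < m
    · rw [if_pos (by omega), if_pos h]
    · rw [if_neg (by omega), if_neg h]


-- helper: sum of naturals each ≥ 1 equal to card forces all = 1
lemma all_one_of_sum_eq_card {β : Type*} (s : Finset β) (t : β → ℕ)
    (h1 : ∀ j ∈ s, 1 ≤ t j) (hs : ∑ j ∈ s, t j = s.card) : ∀ j ∈ s, t j = 1 := by
  by_contra hc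
  push_neg at hc
  obtain ⟨j0, hj0, hj0ne⟩ := hc
  have h2 : 2 ≤ t j0 := by have := h1 j0 hj0; omega
  have : s.card < ∑ j ∈ s, t j := by
    calc s.card = ∑ _j ∈ s, 1 := by simp
    _ < ∑ j ∈ s, t j := Finset.sum_lt_sum h1 ⟨j0, hj0, by omega⟩
  omega

lemma doors_parity {N : ℕ} (L : Fin (N + 1) → ℕ) (hL : ∀ m, L m ≤ N) :
    (Odd (univ.filter fun k : Fin (N + 1) => ∀ j < N, ∃ m, m ≠ k ∧ L m = j).card
      ↔ ∀ j ≤ N, ∃ m, L m = j) := by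
  by_cases hfull : ∀ j ≤ N, ∃ m, L m = j
  · refine iff_of_true ?_ hfull
    -- L is injective as a map to Fin (N+1)
    set L' : Fin (N + 1) → Fin (N + 1) := fun m => ⟨L m, Nat.lt_succ_of_le (hL m)⟩ with hL'
    have hsurj : Function.Surjective L' := by
      intro j
      obtain ⟨m, hm⟩ := hfull (j : ℕ) (Nat.lt_succ_iff.mp j.2)
      exact ⟨m, Fin.ext hm⟩
    have hinj : Function.Injective L' := Finite.injective_iff_surjective.mpr hsurj
    obtain ⟨k0, hk0⟩ := hfull N le_rfl
    have hset : (univ.filter fun k : Fin (N + 1) => ∀ j < N, ∃ m, m ≠ k ∧ L m = j) = {k0} := by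
      ext k
      simp only [Finset.mem_filter, Finset.mem_univ, true_and, Finset.mem_singleton]
      constructor
      · intro hd
        by_contra hne
        have hkN : L k ≠ N := fun h => hne (hinj (Fin.ext (h.trans hk0.symm)))
        have hklt : L k < N := lt_of_le_of_ne (hL k) hkN
        obtain ⟨m, hmk, hm⟩ := hd (L k) hklt
        exact hmk (hinj (Fin.ext hm))
      · rintro rfl
        intro j hj
        obtain ⟨m, hm⟩ := hfull j (le_of_lt hj)
        refine ⟨m, fun h => ?_, hm⟩
        subst h; rw [hk0] at hm; omega
    rw [hset]; simp
  · refine iff_of_false ?_ hfull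
    rw [Nat.not_odd_iff_even]
    by_cases hcov : ∀ j < N, ∃ m, L m = j
    · -- the missing value is N, all labels < N, exactly one doubled fiber
      push_neg at hfull
      obtain ⟨j0, hj0le, hj0⟩ := hfull
      have hj0N : j0 = N := by
        by_contra h
        obtain ⟨m, hm⟩ := hcov j0 (lt_of_le_of_ne hj0le h)
        exact hj0 m hm
      rw [hj0N] at hj0
      have hlt : ∀ m, L m < N := fun m => lt_of_le_of_ne (hL m) (hj0 m)
      set A : ℕ → Finset (Fin (N + 1)) := fun j => univ.filter (fun m => L m = j) with hA
      have hsum : ∑ j ∈ Finset.range N, (A j).card = N + 1 := by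
        have := Finset.card_eq_sum_card_fiberwise
          (f := L) (s := (univ : Finset (Fin (N+1)))) (t := Finset.range N)
          (fun x _ => Finset.mem_range.mpr (hlt x))
        simpa using this.symm
      have hpos : ∀ j ∈ Finset.range N, 1 ≤ (A j).card := by
        intro j hj
        obtain ⟨m, hm⟩ := hcov j (Finset.mem_range.mp hj)
        exact Finset.card_pos.mpr ⟨m, by simp [hA, hm]⟩
      -- find the doubled fiber
      have hex2 : ∃ js ∈ Finset.range N, 2 ≤ (A js).card := by
        by_contra hc
        push_neg at hc
        have : ∀ j ∈ Finset.range N, (A j).card = 1 := by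
          intro j hj; have := hpos j hj; have := hc j hj; omega
        rw [Finset.sum_congr rfl this] at hsum
        simp at hsum
      obtain ⟨js, hjs, hjs2⟩ := hex2
      have hsplit : (A js).card + ∑ j ∈ (Finset.range N).erase js, (A j).card = N + 1 := by
        rw [Finset.add_sum_erase _ (fun j => (A j).card) hjs]; exact hsum
      have herast : ((Finset.range N).erase js).card = N - 1 := by
        rw [Finset.card_erase_of_mem hjs, Finset.card_range]
      have hlow : (N : ℕ) - 1 ≤ ∑ j ∈ (Finset.range N).erase js, (A j).card := by
        rw [← herast]
        calc ((Finset.range N).erase js).card = ∑ _j ∈ (Finset.range N).erase js, 1 := by simp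
        _ ≤ ∑ j ∈ (Finset.range N).erase js, (A j).card :=
            Finset.sum_le_sum (fun j hj => hpos j (Finset.mem_of_mem_erase hj))
      have hNpos : 1 ≤ N := by
        rcases Nat.eq_zero_or_pos N with h | h
        · subst h; exact absurd (hlt 0) (by omega)
        · exact h
      have hjs2' : (A js).card = 2 := by omega
      have hone : ∀ j ∈ (Finset.range N).erase js, (A j).card = 1 := by
        apply all_one_of_sum_eq_card _ _ (fun j hj => hpos j (Finset.mem_of_mem_erase hj))
        omega
      -- doors = A js
      have hdoors : (univ.filter fun k : Fin (N + 1) => ∀ j < N, ∃ m, m ≠ k ∧ L m = j) = A js := by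
        ext k
        simp only [Finset.mem_filter, Finset.mem_univ, true_and, hA]
        constructor
        · intro hd
          obtain ⟨m, hmk, hm⟩ := hd (L k) (hlt k)
          by_contra hne
          -- then A (L k) has card 1 but contains both m and k
          have hLk : L k ∈ (Finset.range N).erase js := by
            refine Finset.mem_erase.mpr ⟨fun h => hne (by simpa [h] using rfl), Finset.mem_range.mpr (hlt k)⟩
          have h1 := hone _ hLk
          have hmk' : m ∈ A (L k) := by simp [hA, hm]
          have hkk : k ∈ A (L k) := by simp [hA]
          have : 2 ≤ (A (L k)).card := Finset.one_lt_card.mpr ⟨m, hmk', k, hkk, hmk⟩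
          omega
        · intro hk
          intro j hj
          by_cases hjjs : j = js
          · subst hjjs
            obtain ⟨m, hm, m', hm', hmm'⟩ := Finset.one_lt_card.mp hjs2
            simp only [hA, Finset.mem_filter] at hm hm'
            rcases eq_or_ne m k with rfl | h
            · exact ⟨m', Ne.symm hmm', hm'.2⟩
            · exact ⟨m, h, hm.2⟩
          · obtain ⟨m, hm⟩ := hcov j hj
            refine ⟨m, fun h => hjjs ?_, hm⟩
            subst h; rw [← hm, hk]
      rw [hdoors, hjs2']
      exact even_two
    · push_neg at hcov
      obtain ⟨j1, hj1, hj1n⟩ := hcov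
      have : (univ.filter fun k : Fin (N + 1) => ∀ j < N, ∃ m, m ≠ k ∧ L m = j) = ∅ := by
        ext k
        simp only [Finset.mem_filter, Finset.mem_univ, true_and, Finset.notMem_empty, iff_false]
        intro hd
        obtain ⟨m, _, hm⟩ := hd j1 hj1
        exact hj1n m hm
      rw [this]; simp

lemma odd_cast {m : ℕ} : (m : ZMod 2) = 1 ↔ Odd m := by
  constructor
  · intro h
    rw [Nat.odd_iff]
    rcases Nat.mod_two_eq_zero_or_one m with h0 | h1
    · exfalso
      have h2 : ((m % 2 : ℕ) : ZMod 2) = 1 := by rwa [ZMod.natCast_mod]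
      rw [h0] at h2
      exact absurd h2 (by decide)
    · exact h1
  · rintro ⟨k, rfl⟩
    push_cast
    rw [show ((2 : ZMod 2)) = 0 by decide]
    ring

lemma even_cast {m : ℕ} : (m : ZMod 2) = 0 ↔ Even m := by
  constructor
  · intro h
    rw [Nat.even_iff]
    rcases Nat.mod_two_eq_zero_or_one m with h0 | h1
    · exact h0
    · exfalso
      have h2 : ((m % 2 : ℕ) : ZMod 2) = 0 := by rwa [ZMod.natCast_mod]
      rw [h1] at h2
      exact absurd h2 (by decide)
  · rintro ⟨k, rfl⟩
    push_cast
    have h2 : ((k : ZMod 2)) + k = 2 * k := by ring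
    rw [h2, show ((2 : ZMod 2)) = 0 by decide]
    ring

lemma filter_iff_congr {α : Type*} (p q : α → Prop) [DecidablePred p] [DecidablePred q]
    (h : ∀ a, p a ↔ q a) (s : Finset α) : s.filter p = s.filter q := by
  ext a; simp only [Finset.mem_filter, h]

lemma card_doors_zmod {d n : ℕ} (ℓ : (Fin d → ℕ) → ℕ)
    (hle : ∀ v : Fin d → ℕ, (∀ i, v i ≤ n) → ℓ v ≤ d) :
    (((univ.filter fun t : ((Fin d → Fin n) × Equiv.Perm (Fin d)) × Fin (d+1) =>
        IsDoor ℓ t.1.1 t.1.2 t.2).card : ZMod 2))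
      = ((univ.filter fun s : (Fin d → Fin n) × Equiv.Perm (Fin d) =>
        IsFull ℓ s.1 s.2).card : ZMod 2) := by
  have hfib := Finset.card_eq_sum_card_fiberwise
    (f := Prod.fst) (s := univ.filter fun t : ((Fin d → Fin n) × Equiv.Perm (Fin d)) × Fin (d+1) =>
      IsDoor ℓ t.1.1 t.1.2 t.2)
    (t := (univ : Finset ((Fin d → Fin n) × Equiv.Perm (Fin d)))) (fun x _ => mem_univ _)
  rw [hfib]
  have hfib2 : ∀ s : (Fin d → Fin n) × Equiv.Perm (Fin d),
      ((univ.filter fun t : ((Fin d → Fin n) × Equiv.Perm (Fin d)) × Fin (d+1) =>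
        IsDoor ℓ t.1.1 t.1.2 t.2).filter fun t => t.1 = s).card
        = (univ.filter fun k : Fin (d+1) => IsDoor ℓ s.1 s.2 k).card := by
    intro s
    apply Finset.card_bij (fun t _ => t.2)
    · intro t ht
      simp only [mem_filter, mem_univ, true_and] at ht ⊢
      obtain ⟨hdoor, heq⟩ := ht
      rw [← heq]
      exact hdoor
    · intro t1 h1 t2 h2 h
      simp only [mem_filter, mem_univ, true_and] at h1 h2
      exact Prod.ext (h1.2.trans h2.2.symm) h
    · intro k hk
      simp only [mem_filter, mem_univ, true_and] at hk
      exact ⟨(s, k), by simp [hk], rfl⟩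
  rw [Finset.sum_congr rfl (fun s _ => hfib2 s)]
  rw [Finset.card_filter (fun s : (Fin d → Fin n) × Equiv.Perm (Fin d) => IsFull ℓ s.1 s.2)]
  push_cast
  apply Finset.sum_congr rfl
  intro s _
  have hL : ∀ m : Fin (d+1), ℓ (vtx s.1 s.2 (m : ℕ)) ≤ d :=
    fun m => hle _ (fun i => vtx_le s.1 s.2 m i)
  have hpar := doors_parity (fun m : Fin (d+1) => ℓ (vtx s.1 s.2 (m : ℕ))) hL
  have hfe : (univ.filter fun k : Fin (d+1) => IsDoor ℓ s.1 s.2 k)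
      = univ.filter fun k : Fin (d+1) =>
          ∀ j < d, ∃ m : Fin (d+1), m ≠ k ∧ ℓ (vtx s.1 s.2 (m : ℕ)) = j := by
    ext a
    simp only [Finset.mem_filter, Finset.mem_univ, true_and]
    exact Iff.rfl
  by_cases hs : IsFull ℓ s.1 s.2
  · rw [if_pos hs]
    apply odd_cast.mpr
    rw [hfe]
    apply hpar.mpr
    intro j hj
    obtain ⟨m, hm⟩ := hs j hj
    exact ⟨m, hm⟩
  · rw [if_neg hs]
    apply even_cast.mpr
    rw [← Nat.not_odd_iff_even]
    rw [hfe]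
    intro hodd
    exact hs (fun j hj => hpar.mp hodd j hj)

lemma even_card_of_invol {α : Type*} (s : Finset α) (f : α → α)
    (hf : ∀ a ∈ s, f a ∈ s) (h2 : ∀ a ∈ s, f (f a) = a) (hne : ∀ a ∈ s, f a ≠ a) :
    Even s.card := by
  classical
  suffices H : ∀ (n : ℕ) (s : Finset α), (∀ a ∈ s, f a ∈ s) → (∀ a ∈ s, f (f a) = a) →
      (∀ a ∈ s, f a ≠ a) → s.card = n → Even s.card from
    H s.card s hf h2 hne rfl
  intro n
  induction n using Nat.strong_induction_on with
  | _ n ih =>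
    intro s hf h2 hne hn
    rcases s.eq_empty_or_nonempty with rfl | ⟨a, ha⟩
    · simp
    · have hfa := hf a ha
      set t := (s.erase a).erase (f a) with ht
      have hmem2 : (f a) ∈ s.erase a := Finset.mem_erase.mpr ⟨hne a ha, hfa⟩
      have hcard : t.card = s.card - 2 := by
        rw [ht, Finset.card_erase_of_mem hmem2, Finset.card_erase_of_mem ha]; omega
      have h2le : 2 ≤ s.card := by
        have h1 : 1 ≤ (s.erase a).card := Finset.card_pos.mpr ⟨_, hmem2⟩
        have := Finset.card_erase_of_mem ha
        omega
      have htsub : ∀ b ∈ t, b ∈ s := fun b hb =>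
        Finset.mem_of_mem_erase (Finset.mem_of_mem_erase hb)
      have hmemt : ∀ b ∈ t, f b ∈ t := by
        intro b hb
        have hbs := htsub b hb
        rcases Finset.mem_erase.mp hb with ⟨hbfa, hb'⟩
        rcases Finset.mem_erase.mp hb' with ⟨hba, _⟩
        refine Finset.mem_erase.mpr ⟨?_, Finset.mem_erase.mpr ⟨?_, hf b hbs⟩⟩
        · intro h
          apply hba
          have := congrArg f h
          rwa [h2 b hbs, h2 a ha] at this
        · intro h; exact hbfa (by rw [← h2 b hbs, h])
      have hstep : Even t.card := by
        refine ih t.card (by omega) t hmemt (fun b hb => h2 b (htsub b hb))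
          (fun b hb => hne b (htsub b hb)) rfl
      have : s.card = t.card + 2 := by omega
      rw [this]; exact hstep.add (by norm_num)

abbrev Flg (d n : ℕ) := ((Fin (d+1) → Fin n) × Equiv.Perm (Fin (d+1))) × Fin (d+2)

def Ifl {d n : ℕ} (t : Flg d n) : Prop :=
  ((t.2 : ℕ) = 0 → (t.1.1 (t.1.2 0) : ℕ) + 2 ≤ n) ∧
  ((t.2 : ℕ) = d + 1 → 1 ≤ (t.1.1 (t.1.2 (Fin.last d)) : ℕ))

def flip {d n : ℕ} (t : Flg d n) : Flg d n :=
  if h0 : (t.2 : ℕ) = 0 then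
    ((Function.update t.1.1 (t.1.2 0) (bump (t.1.1 (t.1.2 0))), t.1.2 * finRotate (d+1)),
      ⟨d+1, by omega⟩)
  else if h2 : (t.2 : ℕ) = d + 1 then
    ((Function.update t.1.1 (t.1.2 (Fin.last d)) (drop (t.1.1 (t.1.2 (Fin.last d)))),
      t.1.2 * (finRotate (d+1))⁻¹), ⟨0, by omega⟩)
  else
    ((t.1.1, t.1.2 * Equiv.swap (⟨(t.2 : ℕ) - 1, by omega⟩ : Fin (d+1))
        ⟨(t.2 : ℕ) - 1 + 1, by omega⟩), t.2)

lemma rot_zero {d : ℕ} (π : Equiv.Perm (Fin (d+1))) :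
    (π * finRotate (d+1)) (Fin.last d) = π 0 := by
  rw [Equiv.Perm.mul_apply, finRotate_succ_apply, Fin.last_add_one]

lemma rot_inv_zero {d : ℕ} (π : Equiv.Perm (Fin (d+1))) :
    (π * (finRotate (d+1))⁻¹) 0 = π (Fin.last d) := by
  have h : (finRotate (d+1))⁻¹ (0 : Fin (d+1)) = Fin.last d := by
    rw [Equiv.Perm.inv_def, Equiv.symm_apply_eq, finRotate_succ_apply, Fin.last_add_one]
  rw [Equiv.Perm.mul_apply, h]

section
variable {d n : ℕ} (ℓ : (Fin (d+1) → ℕ) → ℕ)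

lemma flip_mem (t : Flg d n) (hd : IsDoor ℓ t.1.1 t.1.2 t.2) (hi : Ifl t) :
    IsDoor ℓ (flip t).1.1 (flip t).1.2 (flip t).2 ∧ Ifl (flip t) := by
  obtain ⟨⟨z, π⟩, k⟩ := t
  obtain ⟨hi0, hi1⟩ := hi
  dsimp only at hd hi0 hi1
  by_cases h0 : (k : ℕ) = 0
  · -- bottom facet
    have hz : (z (π 0) : ℕ) + 1 < n := by have := hi0 h0; omega
    have hflip : flip ((z, π), k) =
        ((Function.update z (π 0) (bump (z (π 0))), π * finRotate (d+1)),
          (⟨d+1, by omega⟩ : Fin (d+2))) := by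
      simp [flip, h0]
    rw [hflip]
    refine ⟨?_, ?_, ?_⟩
    · intro j hj
      obtain ⟨m, hmk, hm⟩ := hd j hj
      have hm0 : (m : ℕ) ≠ 0 := by
        intro h; exact hmk (Fin.ext (by rw [h, h0]))
      have hmle : (m : ℕ) ≤ d + 1 := by omega
      refine ⟨⟨(m : ℕ) - 1, by omega⟩, ?_, ?_⟩
      · intro h
        have := congrArg Fin.val h
        simp at this
        omega
      · show ℓ (vtx _ _ ((m : ℕ) - 1)) = j
        rw [vtx_rot z π hz _ (by omega)]
        rw [show (m : ℕ) - 1 + 1 = (m : ℕ) by omega]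
        exact hm
    · exact fun h => absurd (show d + 1 = 0 from h) (by omega)
    · intro _
      show 1 ≤ (Function.update z (π 0) (bump (z (π 0))) ((π * finRotate (d+1)) (Fin.last d)) : ℕ)
      rw [rot_zero, Function.update_self, bump_val _ hz]
      omega
  · by_cases h1 : (k : ℕ) = d + 1
    · -- top facet
      have hz1 : 1 ≤ (z (π (Fin.last d)) : ℕ) := hi1 h1
      have hflip : flip ((z, π), k) =
          ((Function.update z (π (Fin.last d)) (drop (z (π (Fin.last d)))),
            π * (finRotate (d+1))⁻¹), (⟨0, by omega⟩ : Fin (d+2))) := by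
        simp [flip, h0, h1]
      -- key identity : vertices shift up by one
      have hkey : ∀ m : ℕ, m ≤ d →
          vtx (Function.update z (π (Fin.last d)) (drop (z (π (Fin.last d)))))
            (π * (finRotate (d+1))⁻¹) (m + 1) = vtx z π m := by
        intro m hm
        set z'' := Function.update z (π (Fin.last d)) (drop (z (π (Fin.last d)))) with hz''
        set π'' : Equiv.Perm (Fin (d+1)) := π * (finRotate (d+1))⁻¹ with hπ''
        have e0 : π'' 0 = π (Fin.last d) := rot_inv_zero π
        have ezv : (z'' (π'' 0) : ℕ) = (z (π (Fin.last d)) : ℕ) - 1 := by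
          rw [e0, hz'', Function.update_self]; rfl
        have hzlt := (z (π (Fin.last d))).2
        have hcond : (z'' (π'' 0) : ℕ) + 1 < n := by omega
        have := vtx_rot z'' π'' hcond m hm
        rw [e0] at hcond
        have ebump : Function.update z'' (π'' 0) (bump (z'' (π'' 0))) = z := by
          rw [e0]
          funext i
          rcases eq_or_ne i (π (Fin.last d)) with rfl | hne
          · rw [Function.update_self]
            apply Fin.ext
            rw [bump_val _ hcond]
            have hzz : (z'' (π (Fin.last d)) : ℕ) = (z (π (Fin.last d)) : ℕ) - 1 := by
              rw [hz'', Function.update_self]; rfl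
            omega
          · rw [Function.update_of_ne hne, hz'', Function.update_of_ne hne]
        have eperm : π'' * finRotate (d+1) = π := by
          rw [hπ'', inv_mul_cancel_right]
        rw [ebump, eperm] at this
        exact this.symm
      rw [hflip]
      refine ⟨?_, ?_, ?_⟩
      · intro j hj
        obtain ⟨m, hmk, hm⟩ := hd j hj
        have hmle : (m : ℕ) ≤ d := by
          have h2 := m.2
          rcases Nat.lt_succ_iff_lt_or_eq.mp h2 with h | h
          · omega
          · exact absurd (Fin.ext (h.trans h1.symm) : m = k) hmk
        refine ⟨⟨(m : ℕ) + 1, by omega⟩, ?_, ?_⟩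
        · intro h
          have := congrArg Fin.val h
          simp at this
        · show ℓ (vtx _ _ ((m : ℕ) + 1)) = j
          rw [hkey _ hmle]
          exact hm
      · intro _
        show (Function.update z (π (Fin.last d)) (drop (z (π (Fin.last d))))
            ((π * (finRotate (d+1))⁻¹) 0) : ℕ) + 2 ≤ n
        rw [rot_inv_zero, Function.update_self]
        have := (z (π (Fin.last d))).2
        show (z (π (Fin.last d)) : ℕ) - 1 + 2 ≤ n
        omega
      · exact fun h => absurd (show (0:ℕ) = d + 1 from h) (by omega)
    · -- middle facet
      have hflip : flip ((z, π), k) =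
          ((z, π * Equiv.swap (⟨(k : ℕ) - 1, by omega⟩ : Fin (d+1))
              ⟨(k : ℕ) - 1 + 1, by omega⟩), k) := by
        rw [flip, dif_neg h0, dif_neg h1]
      rw [hflip]
      refine ⟨?_, fun h => absurd h h0, fun h => absurd h h1⟩
      intro j hj
      obtain ⟨m, hmk, hm⟩ := hd j hj
      refine ⟨m, hmk, ?_⟩
      show ℓ (vtx z (π * Equiv.swap _ _) (m : ℕ)) = j
      rw [vtx_swap z π _ _ (k : ℕ) (by constructor <;> simp <;> omega) _
        (fun h => hmk (Fin.ext h))]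
      exact hm

lemma flip_flip (t : Flg d n) (hi : Ifl t) : flip (flip t) = t := by
  obtain ⟨⟨z, π⟩, k⟩ := t
  obtain ⟨hi0, hi1⟩ := hi
  dsimp only at hi0 hi1
  by_cases h0 : (k : ℕ) = 0
  · have hz : (z (π 0) : ℕ) + 1 < n := by have := hi0 h0; omega
    have hflip : flip ((z, π), k) =
        ((Function.update z (π 0) (bump (z (π 0))), π * finRotate (d+1)),
          (⟨d+1, by omega⟩ : Fin (d+2))) := by simp [flip, h0]
    rw [hflip]
    have hv : ((⟨d+1, by omega⟩ : Fin (d+2)) : ℕ) = d + 1 := rfl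
    rw [flip, dif_neg (show ¬((⟨d+1, by omega⟩ : Fin (d+2)) : ℕ) = 0 by omega), dif_pos hv]
    simp only
    refine Prod.ext (Prod.ext ?_ ?_) ?_
    · show Function.update _ _ _ = z
      rw [rot_zero]
      funext i
      rcases eq_or_ne i (π 0) with rfl | hne
      · rw [Function.update_self, Function.update_self]
        apply Fin.ext
        show ((drop (bump (z (π 0)))) : ℕ) = _
        show ((bump (z (π 0))) : ℕ) - 1 = _
        rw [bump_val _ hz]
        omega
      · rw [Function.update_of_ne hne, Function.update_of_ne hne]
    · show (π * finRotate (d+1)) * (finRotate (d+1))⁻¹ = π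
      rw [mul_inv_cancel_right]
    · show (⟨0, by omega⟩ : Fin (d+2)) = k
      exact (Fin.ext h0.symm)
  · by_cases h1 : (k : ℕ) = d + 1
    · have hz1 : 1 ≤ (z (π (Fin.last d)) : ℕ) := hi1 h1
      have hzlt := (z (π (Fin.last d))).2
      have hflip : flip ((z, π), k) =
          ((Function.update z (π (Fin.last d)) (drop (z (π (Fin.last d)))),
            π * (finRotate (d+1))⁻¹), (⟨0, by omega⟩ : Fin (d+2))) := by
        simp [flip, h0, h1]
      rw [hflip]
      rw [flip, dif_pos rfl]
      simp only
      refine Prod.ext (Prod.ext ?_ ?_) ?_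
      · rw [rot_inv_zero]
        funext i
        dsimp only
        rcases eq_or_ne i (π (Fin.last d)) with rfl | hne
        · rw [Function.update_self, Function.update_self]
          apply Fin.ext
          rw [bump_val]
          · show (z (π (Fin.last d)) : ℕ) - 1 + 1 = _
            omega
          · show (z (π (Fin.last d)) : ℕ) - 1 + 1 < n
            omega
        · rw [Function.update_of_ne hne, Function.update_of_ne hne]
      · show (π * (finRotate (d+1))⁻¹) * finRotate (d+1) = π
        rw [inv_mul_cancel_right]
      · exact (Fin.ext h1.symm)
    · have hflip : flip ((z, π), k) =
          ((z, π * Equiv.swap (⟨(k : ℕ) - 1, by omega⟩ : Fin (d+1))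
              ⟨(k : ℕ) - 1 + 1, by omega⟩), k) := by
        rw [flip, dif_neg h0, dif_neg h1]
      rw [hflip, flip, dif_neg h0, dif_neg h1]
      simp only
      refine Prod.ext (Prod.ext rfl ?_) rfl
      show (π * Equiv.swap _ _) * Equiv.swap _ _ = π
      rw [mul_assoc, Equiv.swap_mul_self, mul_one]

lemma flip_ne (t : Flg d n) : flip t ≠ t := by
  intro h
  by_cases h0 : (t.2 : ℕ) = 0
  · have h2 : ((flip t).2 : ℕ) = d + 1 := by rw [flip, dif_pos h0]
    rw [h] at h2; omega
  · by_cases h1 : (t.2 : ℕ) = d + 1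
    · have h2 : ((flip t).2 : ℕ) = 0 := by rw [flip, dif_neg h0, dif_pos h1]
      rw [h] at h2; omega
    · have h2 : (flip t).1.2 = t.1.2 * Equiv.swap (⟨(t.2 : ℕ) - 1, by omega⟩ : Fin (d+1))
          ⟨(t.2 : ℕ) - 1 + 1, by omega⟩ := by
        rw [flip, dif_neg h0, dif_neg h1]
      rw [h] at h2
      have happ := congrArg (fun σ : Equiv.Perm (Fin (d+1)) =>
        σ (⟨(t.2 : ℕ) - 1, by omega⟩ : Fin (d+1))) h2
      simp only [Equiv.Perm.mul_apply, Equiv.swap_apply_left] at happ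
      have h3 := t.1.2.injective happ
      have h4 := congrArg Fin.val h3
      simp only [Fin.val_mk] at h4
      omega

lemma even_interior :
    Even (((univ.filter fun t : Flg d n => IsDoor ℓ t.1.1 t.1.2 t.2)).filter
      (fun t => Ifl t)).card := by
  classical
  apply even_card_of_invol _ flip
  · intro t ht
    simp only [Finset.mem_filter, Finset.mem_univ, true_and] at ht ⊢
    obtain ⟨hd, hi⟩ := ht
    obtain ⟨h1, h2⟩ := flip_mem ℓ t hd hi
    refine ⟨h1, h2⟩
  · intro t ht
    simp only [Finset.mem_filter, Finset.mem_univ, true_and] at ht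
    exact flip_flip t ht.2
  · intro t _
    exact flip_ne t

end

section
variable {d n : ℕ} (ℓ : (Fin (d+1) → ℕ) → ℕ)

/-- a door facet cannot lie on a `x_i = 0` face -/
lemma no_door_top (t : Flg d n) (hd : IsDoor ℓ t.1.1 t.1.2 t.2)
    (h0 : ∀ (v : Fin (d+1) → ℕ) (i : Fin (d+1)), (∀ i', v i' ≤ n) → v i = 0 → ℓ v ≠ (i : ℕ))
    (hk : (t.2 : ℕ) = d + 1) (hz : (t.1.1 (t.1.2 (Fin.last d)) : ℕ) = 0) : False := by
  obtain ⟨⟨z, π⟩, k⟩ := t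
  dsimp only at hd hk hz
  obtain ⟨m, hmk, hm⟩ := hd ((π (Fin.last d)) : ℕ) (π (Fin.last d)).2
  have hmle : (m : ℕ) ≤ d := by
    have := m.2
    rcases Nat.lt_succ_iff_lt_or_eq.mp this with h | h
    · omega
    · exact absurd (Fin.ext (h.trans hk.symm) : m = k) hmk
  have hv : vtx z π (m : ℕ) (π (Fin.last d)) = 0 := by
    unfold vtx
    rw [Equiv.symm_apply_apply, if_neg (by rw [Fin.val_last]; omega)]
    omega
  exact h0 _ (π (Fin.last d)) (fun i' => vtx_le z π _ i') hv hm

/-- a boundary bottom-door has `π 0 = last` -/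
lemma door_bot_last (t : Flg d n) (hd : IsDoor ℓ t.1.1 t.1.2 t.2)
    (hN : ∀ (v : Fin (d+1) → ℕ) (i : Fin (d+1)), (∀ i', v i' ≤ n) → v i = n → ℓ v ≤ (i : ℕ))
    (hk : (t.2 : ℕ) = 0) (hz : (t.1.1 (t.1.2 0) : ℕ) + 1 = n) :
    t.1.2 0 = Fin.last d := by
  obtain ⟨⟨z, π⟩, k⟩ := t
  dsimp only at hd hk hz ⊢
  obtain ⟨m, hmk, hm⟩ := hd d (by omega)
  have hm1 : 1 ≤ (m : ℕ) := by
    rcases Nat.eq_zero_or_pos (m : ℕ) with h | h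
    · exact absurd (Fin.ext (h.trans hk.symm) : m = k) hmk
    · exact h
  have hv : vtx z π (m : ℕ) (π 0) = n := by
    unfold vtx
    rw [Equiv.symm_apply_apply, if_pos (by rw [Fin.val_zero]; omega)]
    omega
  have := hN _ (π 0) (fun i' => vtx_le z π _ i') hv
  rw [hm] at this
  have h2 := (π 0).2
  apply Fin.ext
  rw [Fin.val_last]
  omega

lemma door_iff_full (hn : 0 < n) (z₀ : Fin d → Fin n) (σ : Equiv.Perm (Fin d)) :
    IsDoor ℓ (Fin.snoc z₀ (⟨n - 1, by omega⟩ : Fin n)) (asmPerm σ) (0 : Fin (d+2))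
      ↔ IsFull (fun w => ℓ (Fin.snoc w n)) z₀ σ := by
  constructor
  · intro hd j hj
    obtain ⟨m, hmk, hm⟩ := hd j (by omega)
    have hm1 : 1 ≤ (m : ℕ) := by
      rcases Nat.eq_zero_or_pos (m : ℕ) with h | h
      · exact absurd (Fin.ext h : m = 0) hmk
      · exact h
    refine ⟨⟨(m : ℕ) - 1, by have := m.2; omega⟩, ?_⟩
    show ℓ (Fin.snoc (vtx z₀ σ ((m : ℕ) - 1)) n) = j
    rw [← vtx_asm hn]
    rw [show (m : ℕ) - 1 + 1 = (m : ℕ) by omega]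
    exact hm
  · intro hf j hj
    obtain ⟨m', hm'⟩ := hf j (by omega)
    refine ⟨⟨(m' : ℕ) + 1, by have := m'.2; omega⟩, ?_, ?_⟩
    · intro h
      have := congrArg Fin.val h
      simp at this
    · show ℓ (vtx _ _ ((m' : ℕ) + 1)) = j
      rw [vtx_asm hn]
      exact hm'

lemma boundary_card (hn : 0 < n)
    (h0 : ∀ (v : Fin (d+1) → ℕ) (i : Fin (d+1)), (∀ i', v i' ≤ n) → v i = 0 → ℓ v ≠ (i : ℕ))
    (hN : ∀ (v : Fin (d+1) → ℕ) (i : Fin (d+1)), (∀ i', v i' ≤ n) → v i = n → ℓ v ≤ (i : ℕ)) :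
    ((univ.filter fun t : Flg d n => IsDoor ℓ t.1.1 t.1.2 t.2).filter fun t => ¬ Ifl t).card
      = (univ.filter fun s : (Fin d → Fin n) × Equiv.Perm (Fin d) =>
          IsFull (fun w => ℓ (Fin.snoc w n)) s.1 s.2).card := by
  -- boundary flags are exactly bottom flags over the top face
  have hchar : ((univ.filter fun t : Flg d n => IsDoor ℓ t.1.1 t.1.2 t.2).filter
        fun t => ¬ Ifl t)
      = (univ.filter fun t : Flg d n => IsDoor ℓ t.1.1 t.1.2 t.2).filter
        (fun t => (t.2 : ℕ) = 0 ∧ (t.1.1 (t.1.2 0) : ℕ) + 1 = n) := by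
    ext t
    simp only [Finset.mem_filter, Finset.mem_univ, true_and]
    constructor
    · rintro ⟨hd, hni⟩
      refine ⟨hd, ?_⟩
      rw [Ifl, not_and_or] at hni
      rcases hni with h | h
      · push_neg at h
        obtain ⟨hk, hzn⟩ := h
        have := (t.1.1 (t.1.2 0)).2
        exact ⟨hk, by omega⟩
      · push_neg at h
        obtain ⟨hk, hzn⟩ := h
        exact absurd (no_door_top ℓ t hd h0 hk (by omega)) (fun x => x)
    · rintro ⟨hd, hk, hz⟩
      refine ⟨hd, ?_⟩
      rw [Ifl, not_and_or]
      left
      push_neg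
      exact ⟨hk, by omega⟩
  rw [hchar]
  symm
  apply Finset.card_bij (fun (s : (Fin d → Fin n) × Equiv.Perm (Fin d)) _ =>
    ((Fin.snoc s.1 (⟨n - 1, by omega⟩ : Fin n), asmPerm s.2), (0 : Fin (d+2))))
  · intro s hs
    simp only [Finset.mem_filter, Finset.mem_univ, true_and] at hs ⊢
    refine ⟨(door_iff_full ℓ hn s.1 s.2).mpr hs, rfl, ?_⟩
    show ((Fin.snoc s.1 (⟨n - 1, by omega⟩ : Fin n) : Fin (d+1) → Fin n)
      ((asmPerm s.2) 0) : ℕ) + 1 = n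
    rw [asmPerm_zero, Fin.snoc_last]
    show n - 1 + 1 = n
    omega
  · intro a ha b hb h
    have h1 := congrArg (fun t : Flg d n => t.1.1) h
    have h2 := congrArg (fun t : Flg d n => t.1.2) h
    dsimp only at h1 h2
    have ez : a.1 = b.1 := by
      funext j
      have h3 := congrFun h1 j.castSucc
      rwa [Fin.snoc_castSucc, Fin.snoc_castSucc] at h3
    have eσ : a.2 = b.2 := by
      apply Equiv.ext
      intro j
      have h4 := congrArg (fun π : Equiv.Perm (Fin (d+1)) => π j.succ) h2
      rw [asmPerm_succ, asmPerm_succ] at h4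
      exact Fin.castSucc_injective _ h4
    exact Prod.ext ez eσ
  · intro t ht
    simp only [Finset.mem_filter, Finset.mem_univ, true_and] at ht
    obtain ⟨hd, hk, hz⟩ := ht
    have hπ : t.1.2 0 = Fin.last d := door_bot_last ℓ t hd hN hk hz
    have hlastval : (t.1.1 (Fin.last d) : ℕ) = n - 1 := by rw [← hπ]; omega
    have ez : (Fin.snoc (fun j => t.1.1 j.castSucc)
        (⟨n - 1, Nat.sub_lt hn Nat.one_pos⟩ : Fin n) : Fin (d+1) → Fin n) = t.1.1 := by
      funext i
      induction i using Fin.lastCases with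
      | last => rw [Fin.snoc_last]; exact Fin.ext (by rw [hlastval])
      | cast j => rw [Fin.snoc_castSucc]
    have eπ : asmPerm (disasmPerm t.1.2 hπ) = t.1.2 := asmPerm_disasmPerm _ hπ
    have e2 : (0 : Fin (d+2)) = t.2 := Fin.ext (by rw [Fin.val_zero]; omega)
    refine ⟨(fun j => t.1.1 j.castSucc, disasmPerm t.1.2 hπ), ?_, ?_⟩
    · simp only [Finset.mem_filter, Finset.mem_univ, true_and]
      apply (door_iff_full ℓ hn _ _).mp
      show IsDoor ℓ _ _ _
      rw [ez, eπ, e2]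
      exact hd
    · exact Prod.ext (Prod.ext ez eπ) e2
end


theorem sperner (d : ℕ) : ∀ (n : ℕ), 0 < n → ∀ (ℓ : (Fin d → ℕ) → ℕ),
    (∀ v : Fin d → ℕ, (∀ i, v i ≤ n) → ℓ v ≤ d) →
    (∀ (v : Fin d → ℕ) (i : Fin d), (∀ i', v i' ≤ n) → v i = 0 → ℓ v ≠ (i : ℕ)) →
    (∀ (v : Fin d → ℕ) (i : Fin d), (∀ i', v i' ≤ n) → v i = n → ℓ v ≤ (i : ℕ)) →
    Odd (univ.filter fun s : (Fin d → Fin n) × Equiv.Perm (Fin d) =>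
      IsFull ℓ s.1 s.2).card := by
  induction d with
  | zero =>
      intro n hn ℓ hle h0 hN
      have he : (univ.filter fun s : (Fin 0 → Fin n) × Equiv.Perm (Fin 0) =>
          IsFull ℓ s.1 s.2) = univ := by
        ext s
        simp only [mem_filter, mem_univ, true_and, iff_true]
        intro j hj
        have hj0 : j = 0 := by omega
        subst hj0
        refine ⟨0, ?_⟩
        have := hle (vtx s.1 s.2 ((0 : Fin 1) : ℕ)) (fun i => vtx_le _ _ _ i)
        omega
      rw [he, card_univ]
      have huniq : ∀ y : (Fin 0 → Fin n) × Equiv.Perm (Fin 0),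
          y = ((fun i => i.elim0), 1) :=
        fun y => Prod.ext (funext fun i => i.elim0) (Equiv.ext fun i => i.elim0)
      rw [Fintype.card_eq_one_iff.mpr ⟨((fun i => i.elim0), 1), fun y => huniq y⟩]
      exact odd_one
  | succ d IH =>
      intro n hn ℓ hle h0 hN
      apply odd_cast.mp
      have hface := IH n hn (fun w => ℓ (Fin.snoc w n))
        (by
          intro w hw
          have hgrid : ∀ i : Fin (d+1), (Fin.snoc w n : Fin (d+1) → ℕ) i ≤ n := by
            intro i
            induction i using Fin.lastCases with
            | last => rw [Fin.snoc_last]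
            | cast j => rw [Fin.snoc_castSucc]; exact hw j
          have := hN (Fin.snoc w n) (Fin.last d) hgrid (Fin.snoc_last _ _)
          rwa [Fin.val_last] at this)
        (by
          intro w i hw hwi
          have hgrid : ∀ i : Fin (d+1), (Fin.snoc w n : Fin (d+1) → ℕ) i ≤ n := by
            intro i
            induction i using Fin.lastCases with
            | last => rw [Fin.snoc_last]
            | cast j => rw [Fin.snoc_castSucc]; exact hw j
          have := h0 (Fin.snoc w n) i.castSucc hgrid (by rw [Fin.snoc_castSucc]; exact hwi)
          rwa [Fin.coe_castSucc] at this)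
        (by
          intro w i hw hwi
          have hgrid : ∀ i : Fin (d+1), (Fin.snoc w n : Fin (d+1) → ℕ) i ≤ n := by
            intro i
            induction i using Fin.lastCases with
            | last => rw [Fin.snoc_last]
            | cast j => rw [Fin.snoc_castSucc]; exact hw j
          have := hN (Fin.snoc w n) i.castSucc hgrid (by rw [Fin.snoc_castSucc]; exact hwi)
          rwa [Fin.coe_castSucc] at this)
      calc ((univ.filter fun s : (Fin (d+1) → Fin n) × Equiv.Perm (Fin (d+1)) =>
              IsFull ℓ s.1 s.2).card : ZMod 2)
          = ((univ.filter fun t : Flg d n => IsDoor ℓ t.1.1 t.1.2 t.2).card : ZMod 2) :=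
            (card_doors_zmod ℓ hle).symm
        _ = ((((univ.filter fun t : Flg d n => IsDoor ℓ t.1.1 t.1.2 t.2).filter
                fun t => Ifl t).card : ℕ) : ZMod 2)
            + ((((univ.filter fun t : Flg d n => IsDoor ℓ t.1.1 t.1.2 t.2).filter
                fun t => ¬ Ifl t).card : ℕ) : ZMod 2) := by
            rw [← Nat.cast_add, Finset.card_filter_add_card_filter_not]
        _ = 1 := by
            rw [even_cast.mpr (even_interior ℓ), boundary_card ℓ hn h0 hN, zero_add,
              odd_cast.mpr hface]


lemma interior_case {d : ℕ} (hd : 1 ≤ d) (f : (Fin d → ℝ) → (Fin d → ℝ))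
    (hf : ContinuousOn f (Set.Icc 0 1))
    (h0 : ∀ (i : Fin d) (x : Fin d → ℝ), x ∈ Set.Icc 0 1 → x i = 0 → f x i ≤ 0)
    (h1 : ∀ (i : Fin d) (x : Fin d → ℝ), x ∈ Set.Icc 0 1 → x i = 1 → 1 ≤ f x i)
    (y : Fin d → ℝ) (hy : ∀ i, y i ∈ Set.Ioo (0:ℝ) 1) :
    y ∈ f '' Set.Icc 0 1 := by
  by_contra hcon
  rw [Set.mem_image] at hcon
  push_neg at hcon
  set g : (Fin d → ℝ) → (Fin d → ℝ) := fun x => f x - y with hgdef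
  have hgc : ContinuousOn g (Set.Icc 0 1) := hf.sub continuousOn_const
  have hgne : ∀ x ∈ Set.Icc (0 : Fin d → ℝ) 1, g x ≠ 0 := by
    intro x hx h
    exact hcon x hx (sub_eq_zero.mp h)
  have hnorm : ContinuousOn (fun x => ‖g x‖) (Set.Icc 0 1) := hgc.norm
  have hne : (Set.Icc (0 : Fin d → ℝ) 1).Nonempty :=
    Set.nonempty_Icc.mpr (fun i => zero_le_one)
  obtain ⟨x₀, hx₀, hmin⟩ := isCompact_Icc.exists_isMinOn hne hnorm
  set ε := ‖g x₀‖ with hεdef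
  have hεpos : 0 < ε := norm_pos_iff.mpr (hgne x₀ hx₀)
  have hεle : ∀ x ∈ Set.Icc (0 : Fin d → ℝ) 1, ε ≤ ‖g x‖ := fun x hx => hmin hx
  have huc := isCompact_Icc.uniformContinuousOn_of_continuous hgc
  rw [Metric.uniformContinuousOn_iff] at huc
  obtain ⟨δ, hδpos, hδ⟩ := huc ε hεpos
  obtain ⟨N, hNgt⟩ := exists_nat_gt (1 / δ)
  have hNr : (0 : ℝ) < N := lt_trans (by positivity) hNgt
  have hNpos : 0 < N := by exact_mod_cast hNr
  have hNδ : 1 / (N : ℝ) < δ := by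
    rw [div_lt_iff₀ hNr]
    have h2 := (div_lt_iff₀ hδpos).mp hNgt
    linarith
  set p : (Fin d → ℕ) → (Fin d → ℝ) := fun v i => (v i : ℝ) / N with hpdef
  have hpmem : ∀ v : Fin d → ℕ, (∀ i, v i ≤ N) → p v ∈ Set.Icc (0 : Fin d → ℝ) 1 := by
    intro v hv
    constructor
    · intro i
      show (0:ℝ) ≤ (v i : ℝ) / N
      positivity
    · intro i
      show (v i : ℝ) / N ≤ 1
      rw [div_le_one hNr]
      exact_mod_cast hv i
  set ℓ : (Fin d → ℕ) → ℕ := fun v =>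
    if h : (univ.filter fun i : Fin d => 0 < g (p v) i).Nonempty
    then (((univ.filter fun i : Fin d => 0 < g (p v) i).min' h : Fin d) : ℕ) else d
    with hℓdef
  have hle : ∀ v : Fin d → ℕ, (∀ i, v i ≤ N) → ℓ v ≤ d := by
    intro v _
    simp only [hℓdef]
    split
    · exact le_of_lt (Fin.is_lt _)
    · exact le_rfl
  have hc0 : ∀ (v : Fin d → ℕ) (i : Fin d), (∀ i', v i' ≤ N) → v i = 0 → ℓ v ≠ (i : ℕ) := by
    intro v i hv hvi
    have hxmem := hpmem v hv
    have hgneg : g (p v) i < 0 := by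
      have hpv0 : p v i = 0 := by
        show (v i : ℝ) / N = 0
        rw [hvi]; simp
      have := h0 i (p v) hxmem hpv0
      have hyi := (hy i).1
      show f (p v) i - y i < 0
      linarith
    simp only [hℓdef]
    split
    · next h =>
      intro heq
      have hmem := Finset.min'_mem _ h
      rw [Finset.mem_filter] at hmem
      have : (univ.filter fun i : Fin d => 0 < g (p v) i).min' h = i := Fin.ext heq
      rw [this] at hmem
      linarith [hmem.2]
    · intro heq
      have := i.2
      omega
  have hcN : ∀ (v : Fin d → ℕ) (i : Fin d), (∀ i', v i' ≤ N) → v i = N → ℓ v ≤ (i : ℕ) := by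
    intro v i hv hvi
    have hxmem := hpmem v hv
    have hgpos : 0 < g (p v) i := by
      have hpv1 : p v i = 1 := by
        show (v i : ℝ) / N = 1
        rw [hvi, div_self (ne_of_gt hNr)]
      have := h1 i (p v) hxmem hpv1
      have hyi := (hy i).2
      show 0 < f (p v) i - y i
      linarith
    have hmem : i ∈ univ.filter fun j : Fin d => 0 < g (p v) j := by
      rw [Finset.mem_filter]; exact ⟨mem_univ _, hgpos⟩
    simp only [hℓdef]
    split
    · next h => exact Finset.min'_le _ _ hmem
    · next h => exact absurd ⟨i, hmem⟩ h
  have hodd := sperner d N hNpos ℓ hle hc0 hcN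
  have hnonempty : (univ.filter fun s : (Fin d → Fin N) × Equiv.Perm (Fin d) =>
      IsFull ℓ s.1 s.2).Nonempty := by
    rw [← Finset.card_pos]
    rcases hodd with ⟨k, hk⟩
    omega
  obtain ⟨s, hs⟩ := hnonempty
  rw [Finset.mem_filter] at hs
  have hfull := hs.2
  -- the vertex labelled d : all coordinates of g are ≤ 0 there
  obtain ⟨md, hmd⟩ := hfull d le_rfl
  set w := vtx s.1 s.2 (md : ℕ) with hwdef
  have hwgrid : ∀ i, w i ≤ N := fun i => vtx_le _ _ _ i
  have hwmem := hpmem w hwgrid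
  have hwneg : ∀ j, g (p w) j ≤ 0 := by
    intro j
    by_contra hpos
    push_neg at hpos
    have hnonemp : (univ.filter fun i : Fin d => 0 < g (p w) i).Nonempty :=
      ⟨j, by rw [Finset.mem_filter]; exact ⟨mem_univ _, hpos⟩⟩
    simp only [hℓdef] at hmd
    simp only [dif_pos hnonemp] at hmd
    have := Fin.is_lt ((univ.filter fun i : Fin d => 0 < g (p w) i).min' hnonemp)
    omega
  -- find the coordinate where ‖g (p w)‖ is attained
  have hεw : ε ≤ ‖g (p w)‖ := hεle _ hwmem
  have hFinne : (univ : Finset (Fin d)).Nonempty := by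
    rw [Finset.univ_nonempty_iff]
    exact Fin.pos_iff_nonempty.mp (by omega)
  obtain ⟨i, _, hi⟩ := Finset.exists_max_image univ (fun j => |g (p w) j|) hFinne
  have hnormle : ‖g (p w)‖ ≤ |g (p w) i| := by
    apply pi_norm_le_iff_of_nonneg (abs_nonneg _) |>.mpr
    intro j
    exact hi j (mem_univ j)
  have hgwi : g (p w) i ≤ -ε := by
    have h2 : ε ≤ |g (p w) i| := le_trans hεw hnormle
    have h3 := hwneg i
    rcases abs_cases (g (p w) i) with ⟨ha, _⟩ | ⟨ha, _⟩
    · linarith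
    · linarith
  -- the vertex labelled i : g positive in coordinate i there
  obtain ⟨mi, hmi⟩ := hfull (i : ℕ) (le_of_lt i.2)
  set u := vtx s.1 s.2 (mi : ℕ) with hudef
  have hugrid : ∀ j, u j ≤ N := fun j => vtx_le _ _ _ j
  have humem := hpmem u hugrid
  have hupos : 0 < g (p u) i := by
    simp only [hℓdef] at hmi
    by_cases hne2 : (univ.filter fun j : Fin d => 0 < g (p u) j).Nonempty
    · simp only [dif_pos hne2] at hmi
      have hmem := Finset.min'_mem _ hne2
      rw [Finset.mem_filter] at hmem
      have : (univ.filter fun j : Fin d => 0 < g (p u) j).min' hne2 = i := Fin.ext hmi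
      rw [this] at hmem
      exact hmem.2
    · simp only [dif_neg hne2] at hmi
      exact absurd hmi.symm (by have := i.2; omega)
  -- vertices are close
  have hbound : ∀ (a b : ℕ) (j : Fin d),
      |((vtx s.1 s.2 a j : ℝ)) - (vtx s.1 s.2 b j : ℝ)| ≤ 1 := by
    intro a b j
    unfold vtx
    push_cast
    rw [abs_le]
    constructor <;> (split <;> split <;> norm_num)
  have hclose : dist (p u) (p w) ≤ 1 / (N : ℝ) := by
    apply dist_pi_le_iff (by positivity) |>.mpr
    intro j
    show dist ((u j : ℝ) / N) ((w j : ℝ) / N) ≤ 1 / N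
    rw [Real.dist_eq, div_sub_div_same, abs_div, abs_of_pos hNr]
    rw [hudef, hwdef]
    gcongr
    exact hbound _ _ j
  have hdist : dist (g (p u)) (g (p w)) < ε := hδ _ humem _ hwmem (lt_of_le_of_lt hclose hNδ)
  have hcoord : dist (g (p u) i) (g (p w) i) ≤ dist (g (p u)) (g (p w)) :=
    dist_le_pi_dist _ _ i
  rw [Real.dist_eq] at hcoord
  have : ε < |g (p u) i - g (p w) i| := by
    rw [abs_of_pos (by linarith)]
    linarith
  linarith
end PM

/-- A continuous function on the unit cube whose i-th coordinate is ≤ 0 on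
the face {x_i = 0} and ≥ 1 on the face {x_i = 1} has image containing the cube. -/
theorem cube_surjectivity (d : ℕ) (hd : 1 ≤ d) (f : (Fin d → ℝ) → (Fin d → ℝ))
    (hf : ContinuousOn f (Set.Icc 0 1))
    (h0 : ∀ (i : Fin d) (x : Fin d → ℝ), x ∈ Set.Icc 0 1 → x i = 0 → f x i ≤ 0)
    (h1 : ∀ (i : Fin d) (x : Fin d → ℝ), x ∈ Set.Icc 0 1 → x i = 1 → 1 ≤ f x i) :
    Set.Icc (0 : Fin d → ℝ) 1 ⊆ f '' Set.Icc 0 1 := by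
  have hclosed : IsClosed (f '' Set.Icc 0 1) :=
    (isCompact_Icc.image_of_continuousOn hf).isClosed
  have hsub : (Set.pi Set.univ fun _ : Fin d => Set.Ioo (0:ℝ) 1) ⊆ f '' Set.Icc 0 1 :=
    fun y hy => PM.interior_case hd f hf h0 h1 y (fun i => hy i (Set.mem_univ i))
  have hIcc : closure (Set.pi Set.univ fun _ : Fin d => Set.Ioo (0:ℝ) 1)
      = Set.Icc (0 : Fin d → ℝ) 1 := by
    rw [closure_pi_set]
    have h2 : (fun i : Fin d => closure (Set.Ioo (0:ℝ) 1)) = fun _ : Fin d => Set.Icc (0:ℝ) 1 :=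
      funext fun _ => closure_Ioo zero_ne_one
    rw [show (Set.pi Set.univ fun i : Fin d => closure (Set.Ioo (0:ℝ) 1))
        = Set.pi Set.univ fun _ : Fin d => Set.Icc (0:ℝ) 1 by rw [h2]]
    exact Set.pi_univ_Icc (fun _ => (0:ℝ)) (fun _ => (1:ℝ))
  intro yy hyy
  rw [← hIcc] at hyy
  exact closure_minimal hsub hclosed hyy
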